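/- Let d ≥ 2, let (g_j)_{j≥1} be a strictly increasing sequence of positive integers, let G_q = g_1·g_2···g_q, and for each q ≥ 1 let A_q = {G_r : r ≥ q} ∪ {-(d-1)·G_r : r ≥ q} ⊆ ℤ. If 0 belongs to hA_q for every q ≥ 1, then d divides h. -/

import Mathlib

open Pointwise

/-- The `h`-fold sumset: all sums of `h` not necessarily distinct elements of `S`
(for `h ≥ 1`; by convention `hfold 0 S = S`). -/
def hfold {α : Type*} [Add α] : ℕ → Set α → Set α
  | 0, S => S
  | 1, S => S
  | n + 2, S => hfold (n + 1) S + S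

lemma hfold_mem_list {S : Set ℤ} : ∀ n : ℕ, 1 ≤ n → ∀ x ∈ hfold n S,
    ∃ l : List ℤ, l.length = n ∧ (∀ y ∈ l, y ∈ S) ∧ l.sum = x := by
  intro n
  induction n with
  | zero => omega
  | succ n ih =>
    intro _ x hx
    match n with
    | 0 => exact ⟨[x], rfl, by simpa [hfold] using hx, by simp⟩
    | m + 1 =>
      rw [show m + 1 + 1 = m + 2 from rfl, hfold] at hx
      obtain ⟨a, ha, b, hb, rfl⟩ := Set.mem_add.mp hx
      obtain ⟨l, hl, hl2, hl3⟩ := ih (by omega) a ha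
      refine ⟨l ++ [b], by simp [hl], ?_, by simp [hl3]⟩
      intro y hy
      rcases List.mem_append.mp hy with h | h
      · exact hl2 y h
      · rw [List.mem_singleton] at h; exact h ▸ hb

lemma key (d : ℕ) (hd : 2 ≤ d) (g : ℕ → ℕ)
    (hgpos : ∀ j, 1 ≤ j → 0 < g j) (hgmono : ∀ j, 1 ≤ j → g j < g (j + 1))
    (G : ℕ → ℕ) (hG : ∀ q, G q = ∏ j ∈ Finset.Icc 1 q, g j) :
    ∀ n : ℕ, ∀ q : ℕ, 1 ≤ q → ∀ L : List (Bool × ℕ), L.length = n →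
      (∀ p ∈ L, q ≤ p.2) →
      (L.map (fun p => if p.1 then (G p.2 : ℤ) else -(((d:ℤ)-1) * (G p.2 : ℤ)))).sum = 0 →
      n * (d-1) ≤ q → d ∣ n := by
  -- growth of g
  have hgrow : ∀ j, 1 ≤ j → j ≤ g j := by
    intro j hj
    induction j with
    | zero => omega
    | succ k ih =>
      rcases Nat.eq_zero_or_pos k with rfl | hk
      · exact hgpos 1 le_rfl
      · have := hgmono k hk
        have := ih hk
        omega
  have hGpos : ∀ q, 0 < G q := by
    intro q
    rw [hG]
    exact Finset.prod_pos (fun j hj => hgpos j (Finset.mem_Icc.mp hj).1)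
  have hdvd : ∀ m r : ℕ, m < r → G m * g (m+1) ∣ G r := by
    intro m r hmr
    have h1 : G r = G m * ∏ j ∈ Finset.Ioc m r, g j := by
      rw [hG, hG, show (1:ℕ) = 0 + 1 from rfl, Finset.Icc_add_one_left_eq_Ioc, Finset.Icc_add_one_left_eq_Ioc,
        Finset.prod_Ioc_consecutive _ (Nat.zero_le m) (le_of_lt hmr)]
    rw [h1]
    exact mul_dvd_mul_left _ (Finset.dvd_prod_of_mem _ (Finset.mem_Ioc.mpr ⟨Nat.lt_succ_self m, hmr⟩))
  intro n
  induction n using Nat.strong_induction_on with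
  | _ n ih =>
    intro q hq L hlen hLq hsum hbound
    rcases Nat.eq_zero_or_pos n with rfl | hn
    · exact dvd_zero d
    set f : Bool × ℕ → ℤ :=
      (fun p => if p.1 then (G p.2 : ℤ) else -(((d:ℤ)-1) * (G p.2 : ℤ))) with hf
    have hLne : L ≠ [] := by intro h; rw [h] at hlen; simp at hlen; omega
    obtain ⟨p0, hp0⟩ := List.exists_mem_of_ne_nil L hLne
    set s : Finset ℕ := (L.map Prod.snd).toFinset with hsdef
    have hsne : s.Nonempty :=
      ⟨p0.2, List.mem_toFinset.mpr (List.mem_map_of_mem (f := Prod.snd) hp0)⟩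
    set m := s.min' hsne with hmdef
    have hm_mem : ∃ p ∈ L, p.2 = m :=
      List.mem_map.mp (List.mem_toFinset.mp (Finset.min'_mem s hsne))
    have hm_le : ∀ p ∈ L, m ≤ p.2 := by
      intro p hp
      exact Finset.min'_le s p.2 (List.mem_toFinset.mpr (List.mem_map_of_mem (f := Prod.snd) hp))
    obtain ⟨pm, hpmL, hpm2⟩ := hm_mem
    have hqm : q ≤ m := hpm2 ▸ hLq pm hpmL
    set L1 := L.filter (fun p => p.2 == m) with hL1
    set L2 := L.filter (fun p => !(p.2 == m)) with hL2
    have hperm : List.Perm (L1 ++ L2) L := List.filter_append_perm _ L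
    have hmemL1 : ∀ p ∈ L1, p ∈ L ∧ p.2 = m := by
      intro p hp
      rw [hL1, List.mem_filter] at hp
      exact ⟨hp.1, by simpa using hp.2⟩
    have hmemL2 : ∀ p ∈ L2, p ∈ L ∧ m < p.2 := by
      intro p hp
      rw [hL2, List.mem_filter] at hp
      have h2 : p.2 ≠ m := by simpa using hp.2
      exact ⟨hp.1, lt_of_le_of_ne (hm_le p hp.1) (Ne.symm h2)⟩
    -- split L1 by sign
    set L1a := L1.filter (fun p => p.1) with hL1a
    set L1b := L1.filter (fun p => !p.1) with hL1b
    have hperm1 : List.Perm (L1a ++ L1b) L1 := List.filter_append_perm _ L1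
    set a := L1a.length with ha
    set b := L1b.length with hb
    have hlen1 : L1.length = a + b := by
      rw [← hperm1.length_eq, List.length_append]
    -- sums
    have hsum1a : (L1a.map f).sum = a * (G m : ℤ) := by
      rw [List.sum_eq_card_nsmul (L1a.map f) ((G m : ℤ)) ?_, List.length_map]
      · push_cast [nsmul_eq_mul]; ring
      · intro x hx
        obtain ⟨p, hp, rfl⟩ := List.mem_map.mp hx
        have hp1 : p.1 = true := by
          rw [hL1a, List.mem_filter] at hp; simpa using hp.2
        have hp2 : p.2 = m := (hmemL1 p (by rw [hL1a, List.mem_filter] at hp; exact hp.1)).2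
        simp [hf, hp1, hp2]
    have hsum1b : (L1b.map f).sum = b * (-(((d:ℤ)-1) * (G m : ℤ))) := by
      rw [List.sum_eq_card_nsmul (L1b.map f) (-(((d:ℤ)-1) * (G m : ℤ))) ?_, List.length_map]
      · push_cast [nsmul_eq_mul]; ring
      · intro x hx
        obtain ⟨p, hp, rfl⟩ := List.mem_map.mp hx
        have hp1 : p.1 = false := by
          rw [hL1b, List.mem_filter] at hp; simpa using hp.2
        have hp2 : p.2 = m := (hmemL1 p (by rw [hL1b, List.mem_filter] at hp; exact hp.1)).2
        simp [hf, hp1, hp2]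
    have hsum1 : (L1.map f).sum = (a : ℤ) * (G m : ℤ) - (b : ℤ) * ((d:ℤ)-1) * (G m : ℤ) := by
      rw [← (hperm1.map f).sum_eq, List.map_append, List.sum_append, hsum1a, hsum1b]
      ring
    have hdvd2 : ((G m * g (m+1) : ℕ) : ℤ) ∣ (L2.map f).sum := by
      apply List.dvd_sum
      intro x hx
      obtain ⟨p, hp, rfl⟩ := List.mem_map.mp hx
      have hmp := (hmemL2 p hp).2
      have hdv : ((G m * g (m+1) : ℕ) : ℤ) ∣ ((G p.2 : ℕ) : ℤ) :=
        Int.natCast_dvd_natCast.mpr (hdvd m p.2 hmp)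
      rcases Bool.eq_false_or_eq_true p.1 with h1 | h1
      · have hfp : f p = (G p.2 : ℤ) := by rw [hf]; simp [h1]
        rw [hfp]
        exact hdv
      · have hfp : f p = -(((d:ℤ)-1) * (G p.2 : ℤ)) := by rw [hf]; simp [h1]
        rw [hfp]
        exact dvd_neg.mpr (Dvd.dvd.mul_left hdv _)

    have hsumsplit : (L1.map f).sum + (L2.map f).sum = 0 := by
      rw [← List.sum_append, ← List.map_append]
      rw [(hperm.map f).sum_eq]
      exact hsum
    -- divisibility of the coefficient
    have hd1 : ((G m * g (m+1) : ℕ) : ℤ) ∣ ((G m : ℕ) : ℤ) * ((a : ℤ) - (b : ℤ) * ((d:ℤ)-1)) := by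
      have heq : ((G m : ℕ) : ℤ) * ((a : ℤ) - (b : ℤ) * ((d:ℤ)-1)) = -((L2.map f).sum) := by
        have h := hsumsplit
        rw [hsum1] at h
        linarith
      rw [heq]
      exact dvd_neg.mpr hdvd2
    have hd1' : ((G m : ℕ) : ℤ) * ((g (m+1) : ℕ) : ℤ) ∣ ((G m : ℕ) : ℤ) * ((a : ℤ) - (b : ℤ) * ((d:ℤ)-1)) := by
      push_cast at hd1
      exact hd1
    have hGm0 : ((G m : ℕ) : ℤ) ≠ 0 := by exact_mod_cast (hGpos m).ne'
    have hcancel : ((g (m+1) : ℕ) : ℤ) ∣ ((a : ℤ) - (b : ℤ) * ((d:ℤ)-1)) :=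
      (mul_dvd_mul_iff_left hGm0).mp hd1'
    -- bounds
    have hanb : a ≤ n := by
      calc a ≤ L1.length := by rw [ha]; exact List.length_filter_le _ _
      _ ≤ L.length := by rw [hL1]; exact List.length_filter_le _ _
      _ = n := hlen
    have hbnb : b ≤ n := by
      calc b ≤ L1.length := by rw [hb]; exact List.length_filter_le _ _
      _ ≤ L.length := by rw [hL1]; exact List.length_filter_le _ _
      _ = n := hlen
    have hab1 : a ≤ q := by
      have h1 : n ≤ n * (d-1) := Nat.le_mul_of_pos_right n (by omega)
      omega
    have hab2 : b * (d-1) ≤ q := le_trans (Nat.mul_le_mul_right _ hbnb) hbound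
    have hg1 : m + 1 ≤ g (m+1) := hgrow (m+1) (by omega)
    have hgm1 : q < g (m+1) := by omega
    have hcast : ((b * (d-1) : ℕ) : ℤ) = (b:ℤ) * ((d:ℤ)-1) := by
      push_cast [Nat.cast_sub (show 1 ≤ d by omega)]
      ring
    have hzero : (a : ℤ) - (b : ℤ) * ((d:ℤ)-1) = 0 := by
      apply Int.eq_zero_of_abs_lt_dvd hcancel
      have c1 : (a:ℤ) ≤ q := by exact_mod_cast hab1
      have c2 : (b:ℤ) * ((d:ℤ)-1) ≤ q := by rw [← hcast]; exact_mod_cast hab2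
      have c3 : (q:ℤ) < ((g (m+1) : ℕ) : ℤ) := by exact_mod_cast hgm1
      have c4 : (0:ℤ) ≤ (a:ℤ) := Int.natCast_nonneg a
      have c5 : (0:ℤ) ≤ (b:ℤ) * ((d:ℤ)-1) := by rw [← hcast]; exact Int.natCast_nonneg _
      rw [abs_lt]
      constructor <;> linarith
    have haeq : a = b * (d-1) := by
      have : (a : ℤ) = ((b * (d-1) : ℕ) : ℤ) := by rw [hcast]; linarith
      exact_mod_cast this
    have hL1len : L1.length = b * d := by
      rw [hlen1, haeq, ← Nat.mul_succ, Nat.succ_eq_add_one, Nat.sub_add_cancel (by omega)]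
    have hpmL1 : pm ∈ L1 := by
      rw [hL1, List.mem_filter]
      exact ⟨hpmL, by simp [hpm2]⟩
    have hbpos : 0 < b := by
      rcases Nat.eq_zero_or_pos b with hb0 | h
      · rw [hb0, zero_mul, List.length_eq_zero_iff] at hL1len
        rw [hL1len] at hpmL1
        exact absurd hpmL1 List.not_mem_nil
      · exact h
    have hsum2 : (L2.map f).sum = 0 := by
      have h := hsumsplit
      rw [hsum1] at h
      have hexp : (a:ℤ) * (G m : ℤ) - (b:ℤ) * ((d:ℤ)-1) * (G m : ℤ)
          = ((a:ℤ) - (b:ℤ) * ((d:ℤ)-1)) * (G m : ℤ) := by ring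
      rw [hexp, hzero, zero_mul, zero_add] at h
      exact h
    set n2 := L2.length with hn2
    have hlensplit : n = b * d + n2 := by
      rw [← hlen, ← hperm.length_eq, List.length_append, hL1len]
    have hbd : d ≤ b * d := by
      calc d = 1 * d := (one_mul d).symm
      _ ≤ b * d := Nat.mul_le_mul_right d hbpos
    have hn2lt : n2 < n := by omega
    have hrec : d ∣ n2 := by
      apply ih n2 hn2lt (m+1) (by omega) L2 rfl
      · intro p hp
        exact (hmemL2 p hp).2
      · exact hsum2
      · have : n2 * (d-1) ≤ n * (d-1) := Nat.mul_le_mul_right _ (by omega)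
        omega
    rw [hlensplit]
    exact Nat.dvd_add (Dvd.intro_left b rfl) hrec

theorem stmt13 (d : ℕ) (hd : 2 ≤ d) (g : ℕ → ℕ)
    (hgpos : ∀ j, 1 ≤ j → 0 < g j) (hgmono : ∀ j, 1 ≤ j → g j < g (j + 1))
    (G : ℕ → ℕ) (hG : ∀ q, G q = ∏ j ∈ Finset.Icc 1 q, g j)
    (Aq : ℕ → Set ℤ)
    (hAq : ∀ q, Aq q = {x : ℤ | ∃ r : ℕ, q ≤ r ∧
      (x = (G r : ℤ) ∨ x = -(((d : ℤ) - 1) * (G r : ℤ)))}) :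
    ∀ h : ℕ, 1 ≤ h → (∀ q, 1 ≤ q → (0 : ℤ) ∈ hfold h (Aq q)) → d ∣ h := by
  intro h hh h0
  set q0 := h * d with hq0
  have hq01 : 1 ≤ q0 := by
    have : 1 * 1 ≤ h * d := Nat.mul_le_mul hh (by omega)
    omega
  obtain ⟨l, hl, hlmem, hlsum⟩ := hfold_mem_list h hh 0 (h0 q0 hq01)
  -- convert to a list of (sign, index) pairs
  have hconv : ∀ l' : List ℤ, (∀ x ∈ l', x ∈ Aq q0) →
      ∃ L : List (Bool × ℕ), L.length = l'.length ∧ (∀ p ∈ L, q0 ≤ p.2) ∧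
        (L.map (fun p => if p.1 then (G p.2 : ℤ) else -(((d:ℤ)-1) * (G p.2 : ℤ)))).sum = l'.sum := by
    intro l'
    induction l' with
    | nil => intro _; exact ⟨[], rfl, by simp, by simp⟩
    | cons x t iht =>
      intro hmem
      obtain ⟨L, hL1, hL2, hL3⟩ := iht (fun y hy => hmem y (List.mem_cons_of_mem x hy))
      have hx := hmem x (List.mem_cons_self)
      rw [hAq q0] at hx
      obtain ⟨r, hr, hcase⟩ := hx
      rcases hcase with hc | hc
      · exact ⟨(true, r) :: L, by simp [hL1], by
          intro p hp
          rcases List.mem_cons.mp hp with rfl | hp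
          · exact hr
          · exact hL2 p hp, by simp [hL3, hc]⟩
      · exact ⟨(false, r) :: L, by simp [hL1], by
          intro p hp
          rcases List.mem_cons.mp hp with rfl | hp
          · exact hr
          · exact hL2 p hp, by simp [hL3, hc]⟩
  obtain ⟨L, hL1, hL2, hL3⟩ := hconv l hlmem
  have hbound : h * (d - 1) ≤ q0 := by
    rw [hq0]
    exact Nat.mul_le_mul_left h (by omega)
  exact key d hd g hgpos hgmono G hG h q0 hq01 L (by rw [hL1, hl]) hL2
    (by rw [hL3, hlsum]) hbound
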